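/- Let u, w ∈ ℝ^m and v, x ∈ ℝ^d be unit vectors with w ⊥ u and x ⊥ v, let M be a linear map, and set a = ⟨u, Mx⟩ + ⟨w, Mv⟩, b = 2(⟨w, Mx⟩ − ⟨u, Mv⟩). If τ satisfies aτ² − bτ − a = 0, then ⟨(u + τw)/√(1+τ²), M(v + τx)/√(1+τ²)⟩ − ⟨u, Mv⟩ = (τ·a)/2. -/

import Mathlib

open RealInnerProductSpace

/-- Ascent identity for the optimal joint step size: if `aτ² − bτ − a = 0` then
`⟨(u + τw)/√(1+τ²), M(v + τx)/√(1+τ²)⟩ − ⟨u, Mv⟩ = τa/2`. -/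
theorem stmt_5 (d m : ℕ)
    (M : EuclideanSpace ℝ (Fin d) →L[ℝ] EuclideanSpace ℝ (Fin m))
    (u w : EuclideanSpace ℝ (Fin m)) (v x : EuclideanSpace ℝ (Fin d))
    (hu : ‖u‖ = 1) (hw : ‖w‖ = 1) (hv : ‖v‖ = 1) (hx : ‖x‖ = 1)
    (hwu : ⟪w, u⟫ = 0) (hxv : ⟪x, v⟫ = 0)
    (a b : ℝ)
    (ha : a = ⟪u, M x⟫ + ⟪w, M v⟫)
    (hb : b = 2 * (⟪w, M x⟫ - ⟪u, M v⟫))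
    (τ : ℝ) (hτ : a * τ ^ 2 - b * τ - a = 0) :
    ⟪(Real.sqrt (1 + τ ^ 2))⁻¹ • (u + τ • w),
        M ((Real.sqrt (1 + τ ^ 2))⁻¹ • (v + τ • x))⟫ - ⟪u, M v⟫
      = τ * a / 2 := by
  have h1 : (0:ℝ) < 1 + τ^2 := by positivity
  have hs : Real.sqrt (1+τ^2) * Real.sqrt (1+τ^2) = 1+τ^2 := Real.mul_self_sqrt h1.le
  have hsne : Real.sqrt (1+τ^2) ≠ 0 := by positivity
  set p : ℝ := ⟪u, M v⟫ with hp
  set q : ℝ := ⟪u, M x⟫ with hq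
  set r : ℝ := ⟪w, M v⟫ with hr
  set t : ℝ := ⟪w, M x⟫ with ht
  have key : ⟪u + τ • w, M (v + τ • x)⟫ = p + τ*(q+r) + τ^2*t := by
    simp only [map_add, map_smul, inner_add_left, inner_add_right,
      real_inner_smul_left, real_inner_smul_right, ← hp, ← hq, ← hr, ← ht]
    ring
  rw [map_smul, real_inner_smul_left, real_inner_smul_right, key]
  field_simp
  subst ha hb
  linear_combination (-τ) * hτ + (-(2*p + τ*q + τ*r)) * hs
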